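/- Let K ≥ 2, d ≥ 1 and γ > 0, and let D, Q be the Kd×Kd matrices defined from γ as below. Then the operator norms satisfy √(1+γ²) ≤ ‖D+Q‖ ≤ ‖D‖ + ‖Q‖ ≤ max{1+2γ, 3γ}, and moreover ‖(D+Q)·(diag(0,1,…,1) ⊗ I_d)‖ ≥ √(1+γ²), where diag(0,1,…,1) is the K×K diagonal matrix with first diagonal entry 0 and all other diagonal entries 1. -/
import Mathlib

open Matrix Kronecker

noncomputable def opNorm {m n : Type*} [Fintype m] [Fintype n] [DecidableEq n]
    (M : Matrix m n ℝ) : ℝ :=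
  ‖LinearMap.toContinuousLinearMap (Matrix.toEuclideanLin M)‖

lemma euclid_norm_eq {n : Type*} [Fintype n] (y : EuclideanSpace ℝ n) :
    ‖y‖ = Real.sqrt (∑ i, (y i) ^ 2) := by
  rw [EuclideanSpace.norm_eq]
  congr 1
  refine Finset.sum_congr rfl fun i _ => ?_
  rw [Real.norm_eq_abs, sq_abs]

lemma opNorm_le_of_bounds {n : Type*} [Fintype n] [DecidableEq n]
    (M : Matrix n n ℝ) (r : ℝ) (hr : 0 ≤ r)
    (hrow : ∀ i, ∑ j, |M i j| ≤ r) (hcol : ∀ j, ∑ i, |M i j| ≤ r) :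
    opNorm M ≤ r := by
  unfold opNorm
  refine ContinuousLinearMap.opNorm_le_bound _ hr fun x => ?_
  have hcoord : ∀ i, ((LinearMap.toContinuousLinearMap (Matrix.toEuclideanLin M)) x) i
      = ∑ j, M i j * x j := fun i => rfl
  rw [euclid_norm_eq, euclid_norm_eq, ← Real.sqrt_sq hr, ← Real.sqrt_mul (by positivity)]
  apply Real.sqrt_le_sqrt
  simp_rw [hcoord]
  calc ∑ i, (∑ j, M i j * x j) ^ 2
      ≤ ∑ i, r * ∑ j, |M i j| * (x j) ^ 2 := by
        refine Finset.sum_le_sum fun i _ => ?_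
        have h1 : (∑ j, M i j * x j) ^ 2 ≤ (∑ j, |M i j| * |x j|) ^ 2 := by
          rw [← sq_abs (∑ j, M i j * x j)]
          refine pow_le_pow_left₀ (abs_nonneg _) ?_ 2
          refine le_trans (Finset.abs_sum_le_sum_abs _ _) (le_of_eq ?_)
          simp [abs_mul]
        refine h1.trans ?_
        have cs := Finset.sum_mul_sq_le_sq_mul_sq Finset.univ
          (fun j => Real.sqrt |M i j|) (fun j => Real.sqrt |M i j| * |x j|)
        have e1 : (∑ j, Real.sqrt |M i j| * (Real.sqrt |M i j| * |x j|))
            = ∑ j, |M i j| * |x j| := by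
          refine Finset.sum_congr rfl fun j _ => ?_
          rw [← mul_assoc, Real.mul_self_sqrt (abs_nonneg _)]
        have e2 : (∑ j, (Real.sqrt |M i j|) ^ 2) = ∑ j, |M i j| := by
          refine Finset.sum_congr rfl fun j _ => ?_
          rw [Real.sq_sqrt (abs_nonneg _)]
        have e3 : (∑ j, (Real.sqrt |M i j| * |x j|) ^ 2) = ∑ j, |M i j| * (x j) ^ 2 := by
          refine Finset.sum_congr rfl fun j _ => ?_
          rw [mul_pow, Real.sq_sqrt (abs_nonneg _), sq_abs]
        rw [e1, e2, e3] at cs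
        refine cs.trans ?_
        exact mul_le_mul_of_nonneg_right (hrow i)
          (Finset.sum_nonneg fun j _ => by positivity)
    _ = r * ∑ j, (∑ i, |M i j|) * (x j) ^ 2 := by
        rw [← Finset.mul_sum, Finset.sum_comm]
        simp_rw [← Finset.sum_mul]
    _ ≤ r * ∑ j, r * (x j) ^ 2 := by
        refine mul_le_mul_of_nonneg_left (Finset.sum_le_sum fun j _ => ?_) hr
        exact mul_le_mul_of_nonneg_right (hcol j) (sq_nonneg _)
    _ = r ^ 2 * ∑ j, (x j) ^ 2 := by rw [← Finset.mul_sum]; ring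

lemma col_le_opNorm {n : Type*} [Fintype n] [DecidableEq n]
    (M : Matrix n n ℝ) (p : n) : Real.sqrt (∑ i, (M i p) ^ 2) ≤ opNorm M := by
  unfold opNorm
  have h := (LinearMap.toContinuousLinearMap (Matrix.toEuclideanLin M)).le_opNorm
    (EuclideanSpace.single p 1)
  rw [EuclideanSpace.norm_single, norm_one, mul_one] at h
  refine le_trans (le_of_eq ?_) h
  rw [euclid_norm_eq]
  congr 1
  refine Finset.sum_congr rfl fun i _ => ?_
  have hc : ((LinearMap.toContinuousLinearMap (Matrix.toEuclideanLin M))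
      (EuclideanSpace.single p 1)) i = ∑ j, M i j * (EuclideanSpace.single p 1) j := rfl
  rw [hc]
  congr 1
  simp [EuclideanSpace.single_apply, mul_ite, Finset.sum_ite_eq']

lemma sum_ite_le_single {K : ℕ} (P : Fin K → Prop) [DecidablePred P]
    (hP : ∀ a b, P a → P b → a = b) {c : ℝ} (hc : 0 ≤ c) :
    (∑ j, if P j then c else 0) ≤ c := by
  classical
  rw [Finset.sum_ite, Finset.sum_const, Finset.sum_const_zero, add_zero, nsmul_eq_mul]
  have hcard : (Finset.univ.filter P).card ≤ 1 :=
    Finset.card_le_one.mpr fun a ha b hb =>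
      hP a b (Finset.mem_filter.mp ha).2 (Finset.mem_filter.mp hb).2
  calc ((Finset.univ.filter P).card : ℝ) * c ≤ 1 * c :=
        mul_le_mul_of_nonneg_right (by exact_mod_cast hcard) hc
    _ = c := one_mul c

lemma ite_add_ite_le (γ : ℝ) (hγ : 0 < γ) (P R : Prop) [Decidable P] [Decidable R]
    (hPR : ¬(P ∧ R)) :
    (if P then (1:ℝ) else γ) + (if R then (1:ℝ) else γ) ≤ max (1 + γ) (2 * γ) := by
  split_ifs with h1 h2 h3
  · exact absurd ⟨h1, h2⟩ hPR
  · exact le_max_left _ _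
  · exact le_trans (le_of_eq (add_comm _ _)) (le_max_left _ _)
  · exact le_trans (le_of_eq (by ring)) (le_max_right _ _)

theorem stmt0 (K d : ℕ) (hK : 2 ≤ K) (hd : 1 ≤ d) (γ : ℝ) (hγ : 0 < γ)
    (Tγ : Matrix (Fin K) (Fin K) ℝ)
    (hT : ∀ i j : Fin K,
      Tγ i j =
        if (i : ℕ) + 1 = (j : ℕ) then (if (i : ℕ) = 0 then -1 else -γ)
        else if (j : ℕ) + 1 = (i : ℕ) then (if (j : ℕ) = 0 then 1 else γ)
        else 0)
    (D Q J : Matrix (Fin K × Fin d) (Fin K × Fin d) ℝ)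
    (hD : D = (Matrix.diagonal fun i : Fin K => if (i : ℕ) = K - 1 then γ else 0) ⊗ₖ
        (1 : Matrix (Fin d) (Fin d) ℝ))
    (hQ : Q = Tγ ⊗ₖ (1 : Matrix (Fin d) (Fin d) ℝ))
    (hJ : J = (Matrix.diagonal fun i : Fin K => if (i : ℕ) = 0 then (0 : ℝ) else 1) ⊗ₖ
        (1 : Matrix (Fin d) (Fin d) ℝ)) :
    Real.sqrt (1 + γ ^ 2) ≤ opNorm (D + Q) ∧
    opNorm (D + Q) ≤ opNorm D + opNorm Q ∧
    opNorm D + opNorm Q ≤ max (1 + 2 * γ) (3 * γ) ∧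
    Real.sqrt (1 + γ ^ 2) ≤ opNorm ((D + Q) * J) := by
  -- basic objects
  have hK1 : 1 < K := hK
  have hd0 : 0 < d := hd
  set p : Fin K × Fin d := (⟨1, hK1⟩, ⟨0, hd0⟩) with hp
  set a : Fin K × Fin d := (⟨0, by omega⟩, ⟨0, hd0⟩) with ha
  set b : Fin K × Fin d := (⟨if K = 2 then 1 else 2, by split <;> omega⟩, ⟨0, hd0⟩) with hb
  -- entry computations for the lower bound
  have hEa : (D + Q) a p = -1 := by
    rw [Matrix.add_apply, hD, hQ]
    simp only [kroneckerMap_apply, Matrix.diagonal_apply, Matrix.one_apply, hT]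
    norm_num [ha, hp, Fin.ext_iff]
  have hEb : (D + Q) b p = γ := by
    rw [Matrix.add_apply, hD, hQ]
    simp only [kroneckerMap_apply, Matrix.diagonal_apply, Matrix.one_apply, hT]
    by_cases h2 : K = 2
    · norm_num [hb, hp, Fin.ext_iff, h2]
    · have hb1 : ((b.1 : ℕ)) = 2 := by simp [hb, h2]
      norm_num [hb, hp, Fin.ext_iff, h2]
  have hab : a ≠ b := by
    intro h
    have := congrArg (fun x => ((x.1 : Fin K) : ℕ)) h
    simp only [ha, hb] at this
    split at this <;> omega
  have hcolsum : (1 : ℝ) + γ ^ 2 ≤ ∑ i, ((D + Q) i p) ^ 2 := by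
    have hsum := Finset.sum_le_sum_of_subset_of_nonneg
      (Finset.subset_univ ({a, b} : Finset (Fin K × Fin d)))
      (fun i _ _ => sq_nonneg (((D + Q) i p)))
    rw [Finset.sum_pair hab] at hsum
    calc (1 : ℝ) + γ ^ 2 = ((D + Q) a p) ^ 2 + ((D + Q) b p) ^ 2 := by
          rw [hEa, hEb]; ring
      _ ≤ _ := hsum
  have part1 : Real.sqrt (1 + γ ^ 2) ≤ opNorm (D + Q) :=
    le_trans (Real.sqrt_le_sqrt hcolsum) (col_le_opNorm _ _)
  -- triangle inequality
  have part2 : opNorm (D + Q) ≤ opNorm D + opNorm Q := by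
    unfold opNorm
    rw [map_add, map_add]
    exact norm_add_le _ _
  -- norm of D
  have hDnorm : opNorm D ≤ γ := by
    have hDpt : ∀ u v : Fin K × Fin d, |D u v| ≤ if u = v then γ else 0 := by
      intro u v
      rw [hD]
      by_cases h : u = v
      · subst h
        simp only [kroneckerMap_apply, Matrix.diagonal_apply_eq, Matrix.one_apply_eq,
          if_pos rfl, mul_one]
        split_ifs <;> simp [abs_of_nonneg hγ.le, hγ.le]
      · rw [if_neg h]
        by_cases h1 : u.1 = v.1
        · have h2 : u.2 ≠ v.2 := fun h2 => h (Prod.ext h1 h2)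
          simp [kroneckerMap_apply, Matrix.one_apply, h2]
        · simp [kroneckerMap_apply, Matrix.diagonal_apply, h1]
    refine opNorm_le_of_bounds D γ hγ.le (fun u => ?_) (fun v => ?_)
    · calc ∑ v, |D u v| ≤ ∑ v, if u = v then γ else 0 :=
            Finset.sum_le_sum fun v _ => hDpt u v
        _ = γ := by rw [Finset.sum_ite_eq]; simp
    · calc ∑ u, |D u v| ≤ ∑ u, if u = v then γ else 0 :=
            Finset.sum_le_sum fun u _ => hDpt u v
        _ = γ := by rw [Finset.sum_ite_eq']; simp
  -- norm of Q
  have habsQ : ∀ (i : Fin K) (k : Fin d) (j : Fin K) (l : Fin d),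
      |Q (i, k) (j, l)| = |Tγ i j| * (if k = l then 1 else 0) := by
    intro i k j l
    rw [hQ]
    simp only [kroneckerMap_apply, Matrix.one_apply]
    split_ifs <;> simp [abs_mul]
  have hQrow : ∀ u : Fin K × Fin d, ∑ v, |Q u v| = ∑ j, |Tγ u.1 j| := by
    intro u
    rw [Fintype.sum_prod_type]
    simp_rw [habsQ u.1 u.2]
    simp [← Finset.mul_sum, Finset.sum_ite_eq]
  have hQcol : ∀ v : Fin K × Fin d, ∑ u, |Q u v| = ∑ i, |Tγ i v.1| := by
    intro v
    rw [Fintype.sum_prod_type]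
    have : ∀ i k, |Q (i, k) v| = |Tγ i v.1| * (if k = v.2 then 1 else 0) := by
      intro i k
      have := habsQ i k v.1 v.2
      simpa using this
    simp_rw [this]
    simp [← Finset.mul_sum, Finset.sum_ite_eq']
  have hmx : (0:ℝ) ≤ max (1 + γ) (2 * γ) := le_trans (by linarith) (le_max_left _ _)
  have hTrow : ∀ i : Fin K, ∑ j, |Tγ i j| ≤ max (1 + γ) (2 * γ) := by
    intro i
    have hpt : ∀ j : Fin K, |Tγ i j| ≤
        (if (i : ℕ) + 1 = (j : ℕ) then (if (i : ℕ) = 0 then (1:ℝ) else γ) else 0)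
        + (if (j : ℕ) + 1 = (i : ℕ) then (if (i : ℕ) = 1 then (1:ℝ) else γ) else 0) := by
      intro j
      rw [hT i j]
      split_ifs <;> first
        | (exfalso; omega)
        | (simp [abs_neg, abs_of_pos hγ])
    calc ∑ j, |Tγ i j| ≤ _ := Finset.sum_le_sum fun j _ => hpt j
      _ = (∑ j : Fin K, if (i : ℕ) + 1 = (j : ℕ) then (if (i : ℕ) = 0 then (1:ℝ) else γ) else 0)
          + (∑ j : Fin K, if (j : ℕ) + 1 = (i : ℕ) then (if (i : ℕ) = 1 then (1:ℝ) else γ) else 0) :=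
          Finset.sum_add_distrib
      _ ≤ (if (i : ℕ) = 0 then (1:ℝ) else γ) + (if (i : ℕ) = 1 then (1:ℝ) else γ) := by
          refine add_le_add ?_ ?_
          · exact sum_ite_le_single _ (fun x y hx hy => by apply Fin.ext; omega)
              (by split_ifs <;> linarith)
          · exact sum_ite_le_single _ (fun x y hx hy => by apply Fin.ext; omega)
              (by split_ifs <;> linarith)
      _ ≤ max (1 + γ) (2 * γ) := by
          refine ite_add_ite_le γ hγ _ _ (by omega)
  have hTcol : ∀ j : Fin K, ∑ i, |Tγ i j| ≤ max (1 + γ) (2 * γ) := by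
    intro j
    have hpt : ∀ i : Fin K, |Tγ i j| ≤
        (if (i : ℕ) + 1 = (j : ℕ) then (if (j : ℕ) = 1 then (1:ℝ) else γ) else 0)
        + (if (j : ℕ) + 1 = (i : ℕ) then (if (j : ℕ) = 0 then (1:ℝ) else γ) else 0) := by
      intro i
      rw [hT i j]
      split_ifs <;> first
        | (exfalso; omega)
        | (simp [abs_neg, abs_of_pos hγ])
    calc ∑ i, |Tγ i j| ≤ _ := Finset.sum_le_sum fun i _ => hpt i
      _ = (∑ i : Fin K, if (i : ℕ) + 1 = (j : ℕ) then (if (j : ℕ) = 1 then (1:ℝ) else γ) else 0)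
          + (∑ i : Fin K, if (j : ℕ) + 1 = (i : ℕ) then (if (j : ℕ) = 0 then (1:ℝ) else γ) else 0) :=
          Finset.sum_add_distrib
      _ ≤ (if (j : ℕ) = 1 then (1:ℝ) else γ) + (if (j : ℕ) = 0 then (1:ℝ) else γ) := by
          refine add_le_add ?_ ?_
          · exact sum_ite_le_single _ (fun x y hx hy => by apply Fin.ext; omega)
              (by split_ifs <;> linarith)
          · exact sum_ite_le_single _ (fun x y hx hy => by apply Fin.ext; omega)
              (by split_ifs <;> linarith)
      _ ≤ max (1 + γ) (2 * γ) := by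
          refine ite_add_ite_le γ hγ _ _ (by omega)
  have hQnorm : opNorm Q ≤ max (1 + γ) (2 * γ) := by
    refine opNorm_le_of_bounds Q _ hmx (fun u => ?_) (fun v => ?_)
    · rw [hQrow]; exact hTrow u.1
    · rw [hQcol]; exact hTcol v.1
  have part3 : opNorm D + opNorm Q ≤ max (1 + 2 * γ) (3 * γ) := by
    have h := add_le_add hDnorm hQnorm
    refine h.trans ?_
    rcases le_total (1 + γ) (2 * γ) with h' | h'
    · rw [max_eq_right h']
      refine le_trans (le_of_eq (by ring)) (le_max_right _ _)
    · rw [max_eq_left h']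
      refine le_trans (le_of_eq (by ring)) (le_max_left _ _)
  -- product column
  have hprodcol : ∀ i, ((D + Q) * J) i p = (D + Q) i p := by
    intro i
    rw [Matrix.mul_apply]
    rw [Finset.sum_eq_single p]
    · have : J p p = 1 := by
        rw [hJ]
        simp [kroneckerMap_apply, Matrix.diagonal_apply_eq, Matrix.one_apply_eq, hp]
      rw [this, mul_one]
    · intro q _ hq
      have : J q p = 0 := by
        rw [hJ]
        by_cases h1 : q.1 = p.1
        · have h2 : q.2 ≠ p.2 := fun h2 => hq (Prod.ext h1 h2)
          simp [kroneckerMap_apply, Matrix.one_apply, h2]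
        · simp [kroneckerMap_apply, Matrix.diagonal_apply, h1]
      rw [this, mul_zero]
    · intro h; exact absurd (Finset.mem_univ p) h
  have part4 : Real.sqrt (1 + γ ^ 2) ≤ opNorm ((D + Q) * J) := by
    have heq : ∑ i, (((D + Q) * J) i p) ^ 2 = ∑ i, ((D + Q) i p) ^ 2 :=
      Finset.sum_congr rfl fun i _ => by rw [hprodcol i]
    refine le_trans (Real.sqrt_le_sqrt ?_) (col_le_opNorm _ p)
    rw [heq]; exact hcolsum
  exact ⟨part1, part2, part3, part4⟩
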